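/- arXiv:2204.05618 — 5 statements merged into one kernel-verified Lean document; each statement's English description precedes it below -/
import Mathlib

section
/- Let λ₁, λ₂ > 0 and H > 0. Suppose f : ℕ → ℝ satisfies f(i) ≤ H for all i and the recursion f(i) ≤ sqrt(λ₁ · f(i+1)) + λ₁ + 2^{i+1} · λ₂ for all i. Then f(0) ≤ 6(λ₁ + λ₂). -/
/-- Variance-recursion bound (Lemma 4 of Ren et al. 2021): if `f : ℕ → ℝ` is nonnegative,
uniformly bounded by `H`, and satisfies `f i ≤ sqrt (λ₁ f (i+1)) + λ₁ + 2^(i+1) λ₂`, then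
`f 0 ≤ 6 (λ₁ + λ₂)`. -/
theorem stmt_2 (l1 l2 H : ℝ) (hl1 : 0 < l1) (hl2 : 0 < l2) (hH : 0 < H)
    (f : ℕ → ℝ) (hf0 : ∀ i, 0 ≤ f i) (hfH : ∀ i, f i ≤ H)
    (hrec : ∀ i, f i ≤ Real.sqrt (l1 * f (i + 1)) + l1 + 2 ^ (i + 1) * l2) :
    f 0 ≤ 6 * (l1 + l2) := by
  -- step inequality via AM-GM: sqrt(l1 * x) ≤ l1 + x/4
  have hstep : ∀ i, f i ≤ 2 * l1 + 2 ^ (i + 1) * l2 + f (i + 1) / 4 := by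
    intro i
    have hx : 0 ≤ f (i + 1) := hf0 _
    have hsq : Real.sqrt (l1 * f (i + 1)) ≤ l1 + f (i + 1) / 4 := by
      have h1 : Real.sqrt (l1 * f (i + 1)) ≤ Real.sqrt ((l1 + f (i + 1) / 4) ^ 2) :=
        Real.sqrt_le_sqrt (by nlinarith [sq_nonneg (l1 - f (i + 1) / 4)])
      rwa [Real.sqrt_sq (by positivity)] at h1
    have := hrec i
    linarith
  -- main induction
  have key : ∀ n i, f i ≤ (8 / 3) * l1 + 2 ^ (i + 2) * l2 + H / 4 ^ n := by
    intro n
    induction n with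
    | zero =>
      intro i
      have := hfH i
      have : (0:ℝ) ≤ 2 ^ (i + 2) * l2 := by positivity
      simp only [pow_zero]
      nlinarith [hfH i, hl1.le]
    | succ n ih =>
      intro i
      have h1 := hstep i
      have h2 := ih (i + 1)
      have hpow : (2:ℝ) ^ (i + 1 + 2) = 2 * 2 ^ (i + 2) := by ring
      have hpow4 : (4:ℝ) ^ (n + 1) = 4 * 4 ^ n := by ring
      rw [hpow] at h2
      rw [hpow4]
      have h4 : (0:ℝ) < 4 ^ n := by positivity
      calc f i ≤ 2 * l1 + 2 ^ (i + 1) * l2 + f (i + 1) / 4 := h1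
        _ ≤ 2 * l1 + 2 ^ (i + 1) * l2 + ((8 / 3) * l1 + 2 * 2 ^ (i + 2) * l2 + H / 4 ^ n) / 4 := by
            linarith
        _ ≤ (8 / 3) * l1 + 2 ^ (i + 2) * l2 + H / (4 * 4 ^ n) := by
            have : (2:ℝ) ^ (i + 2) = 2 * 2 ^ (i + 1) := by ring
            rw [this]
            have heq : H / (4 * (4:ℝ) ^ n) = H / 4 ^ n / 4 := by ring
            rw [heq]
            linarith
  -- choose n large
  obtain ⟨n, hn⟩ := pow_unbounded_of_one_lt (H / l1) (show (1:ℝ) < 4 by norm_num)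
  have h0 := key n 0
  have h4 : (0:ℝ) < 4 ^ n := by positivity
  have hHn : H / 4 ^ n ≤ l1 := by
    rw [div_le_iff₀ h4]
    have := (div_lt_iff₀ hl1).mp hn
    linarith [this]
  norm_num at h0
  linarith
end

section
/- For Bernoulli distributions with parameters p + ε and p where 1/2 ≤ p < 1 and 0 < ε ≤ 1 - p, the KL divergence satisfies KL(Bern(p+ε) ‖ Bern(p)) ≥ ε²/(2p(1-p)). -/
/-- KL divergence between Bernoulli distributions,
`KL(Bern q ‖ Bern p) = q log (q/p) + (1-q) log ((1-q)/(1-p))`. -/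
noncomputable def klBern (q p : ℝ) : ℝ :=
  q * Real.log (q / p) + (1 - q) * Real.log ((1 - q) / (1 - p))

/-- For Bernoulli distributions with parameters `p + ε` and `p`, where `1/2 ≤ p < 1` and
`0 < ε ≤ 1 - p`, the KL divergence satisfies `KL(Bern(p+ε) ‖ Bern p) ≥ ε² / (2 p (1-p))`. -/
theorem stmt_4 (p ε : ℝ) (hp : 1 / 2 ≤ p) (hp1 : p < 1) (hε : 0 < ε) (hε1 : ε ≤ 1 - p) :
    ε ^ 2 / (2 * p * (1 - p)) ≤ klBern (p + ε) p := by
  have hp0 : 0 < p := by linarith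
  have h1p : 0 < 1 - p := by linarith
  have hq1 : p + ε ≤ 1 := by linarith
  have hc : 0 < p * (1 - p) := mul_pos hp0 h1p
  set c := p * (1 - p) with hcdef
  -- the "inner" function G
  set G : ℝ → ℝ := fun x => Real.log x - Real.log (1 - x) - (x - p) / c with hGdef
  have hGderiv : ∀ x ∈ Set.Ico p 1, HasDerivAt G (1 / x + 1 / (1 - x) - 1 / c) x := by
    intro x hx
    have hx0 : 0 < x := lt_of_lt_of_le hp0 hx.1
    have h1x : 0 < 1 - x := by linarith [hx.2]
    have d1 : HasDerivAt Real.log (1 / x) x := by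
      simpa [one_div] using Real.hasDerivAt_log hx0.ne'
    have d2 : HasDerivAt (fun x : ℝ => Real.log (1 - x)) ((1 - x)⁻¹ * (-1)) x := by
      exact (Real.hasDerivAt_log h1x.ne').comp x ((hasDerivAt_id x).const_sub 1)
    have d3 : HasDerivAt (fun x : ℝ => (x - p) / c) (1 / c) x := by
      simpa using ((hasDerivAt_id x).sub_const p).div_const c
    have := (d1.sub d2).sub d3
    refine this.congr_deriv ?_
    field_simp
    ring
  have hGmono : MonotoneOn G (Set.Ico p 1) := by
    apply monotoneOn_of_deriv_nonneg (convex_Ico p 1)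
    · exact fun x hx => (hGderiv x hx).continuousAt.continuousWithinAt
    · intro x hx
      rw [interior_Ico] at hx
      exact (hGderiv x ⟨hx.1.le, hx.2⟩).differentiableAt.differentiableWithinAt
    · intro x hx
      rw [interior_Ico] at hx
      rw [(hGderiv x ⟨hx.1.le, hx.2⟩).deriv]
      have hx0 : 0 < x := lt_trans hp0 hx.1
      have h1x : 0 < 1 - x := by linarith [hx.2]
      have hxx : 0 < x * (1 - x) := mul_pos hx0 h1x
      have hle : x * (1 - x) ≤ c := by
        rw [hcdef]; nlinarith [hx.1, hp]
      have h1 : 1 / c ≤ 1 / (x * (1 - x)) := one_div_le_one_div_of_le hxx hle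
      have h2 : 1 / (x * (1 - x)) = 1 / x + 1 / (1 - x) := by
        field_simp
        ring
      linarith [h1, h2.symm.le]
  -- the main function H
  set H : ℝ → ℝ := fun q => q * Real.log q - q * Real.log p + (1 - q) * Real.log (1 - q)
      - (1 - q) * Real.log (1 - p) - (q - p) ^ 2 / (2 * c) with hHdef
  have hHderiv : ∀ q ∈ Set.Ioo p 1, HasDerivAt H (G q - G p) q := by
    intro q hq
    have hq0 : 0 < q := lt_trans hp0 hq.1
    have h1q : 0 < 1 - q := by linarith [hq.2]
    have d1 : HasDerivAt (fun x : ℝ => x * Real.log x) (Real.log q + 1) q :=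
      Real.hasDerivAt_mul_log hq0.ne'
    have d2 : HasDerivAt (fun x : ℝ => x * Real.log p) (Real.log p) q := by
      simpa using (hasDerivAt_id q).mul_const (Real.log p)
    have d3 : HasDerivAt (fun x : ℝ => (1 - x) * Real.log (1 - x))
        ((Real.log (1 - q) + 1) * (-1)) q :=
      (Real.hasDerivAt_mul_log h1q.ne').comp q ((hasDerivAt_id q).const_sub 1)
    have d4 : HasDerivAt (fun x : ℝ => (1 - x) * Real.log (1 - p))
        ((-1) * Real.log (1 - p)) q :=
      ((hasDerivAt_id q).const_sub 1).mul_const (Real.log (1 - p))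
    have d5 : HasDerivAt (fun x : ℝ => (x - p) ^ 2 / (2 * c))
        ((2 * (q - p) ^ 1 * 1) / (2 * c)) q := by
      exact (((hasDerivAt_id q).sub_const p).pow 2).div_const (2 * c)
    have := (((d1.sub d2).add d3).sub d4).sub d5
    refine this.congr_deriv ?_
    rw [hGdef]
    simp only [sub_self, zero_div]
    field_simp
    ring
  have hHcont : Continuous H := by
    rw [hHdef]
    have h1 : Continuous fun x : ℝ => x * Real.log x := Real.continuous_mul_log
    have hc1 : Continuous fun x : ℝ => 1 - x := continuous_const.sub continuous_id
    exact ((((h1.sub (continuous_id.mul continuous_const)).add (h1.comp hc1)).sub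
      (hc1.mul continuous_const)).sub
      (((continuous_id.sub continuous_const).pow 2).div_const _))
  have hHmono : MonotoneOn H (Set.Icc p (p + ε)) := by
    apply monotoneOn_of_deriv_nonneg (convex_Icc p (p + ε)) hHcont.continuousOn
    · intro x hx
      rw [interior_Icc] at hx
      have hx1 : x ∈ Set.Ioo p 1 := ⟨hx.1, lt_of_lt_of_le hx.2 hq1⟩
      exact (hHderiv x hx1).differentiableAt.differentiableWithinAt
    · intro x hx
      rw [interior_Icc] at hx
      have hx1 : x ∈ Set.Ioo p 1 := ⟨hx.1, lt_of_lt_of_le hx.2 hq1⟩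
      rw [(hHderiv x hx1).deriv]
      have := hGmono ⟨le_refl p, hp1⟩ ⟨hx1.1.le, hx1.2⟩ hx1.1.le
      linarith
  have hHp : H p = 0 := by
    rw [hHdef]; simp
  have hkey : 0 ≤ H (p + ε) := by
    have := hHmono ⟨le_refl p, by linarith⟩ ⟨by linarith, le_refl _⟩ (by linarith)
    linarith [hHp]
  -- relate klBern to H
  have h2c : 2 * p * (1 - p) = 2 * c := by rw [hcdef]; ring
  rcases lt_or_eq_of_le hq1 with hlt | heq
  · have hq0 : 0 < p + ε := by linarith
    have h1q : 0 < 1 - (p + ε) := by linarith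
    have hkl : klBern (p + ε) p = H (p + ε) + (p + ε - p) ^ 2 / (2 * c) := by
      rw [klBern, hHdef, Real.log_div hq0.ne' hp0.ne', Real.log_div h1q.ne' h1p.ne']
      ring
    rw [hkl, h2c, show p + ε - p = ε by ring]
    exact le_add_of_nonneg_left hkey
  · -- p + ε = 1
    have hε' : ε = 1 - p := by linarith
    have hkl : klBern (p + ε) p = -Real.log p := by
      rw [klBern, heq]
      simp [Real.log_div, hp0.ne']
    have hH1 : H (p + ε) = -Real.log p - ε ^ 2 / (2 * c) := by
      rw [hHdef, heq]
      simp only [Real.log_one, mul_one, sub_self, zero_mul, mul_zero, Real.log_zero, one_mul]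
      rw [show (1 : ℝ) - p = ε by linarith]
      ring
    rw [hkl, h2c]
    rw [hH1] at hkey
    linarith
end

section
/- In a finite discounted MDP, for any two policies π and π', J(π) - J(π') = H · E_{(s) ~ d^π} [ Σ_a π(a|s) A^{π'}(s,a) ], where H = 1/(1-γ), d^π is the normalized discounted state occupancy of π, and A^{π'}(s,a) = Q^{π'}(s,a) - V^{π'}(s) is the advantage function of π'. -/
open Finset

/-- State distribution at time `t` under stochastic policy `π`, dynamics `P`, initial `ρ`. -/
noncomputable def stateDist {S A : Type*} [Fintype S] [Fintype A]
    (P : S → A → S → ℝ) (π : S → A → ℝ) (ρ : S → ℝ) : ℕ → S → ℝ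
  | 0 => ρ
  | (t + 1) => fun s' => ∑ s, ∑ a, stateDist P π ρ t s * π s a * P s a s'

/-- Expected discounted return `J(π)` from initial distribution `ρ`. -/
noncomputable def Jret {S A : Type*} [Fintype S] [Fintype A]
    (P : S → A → S → ℝ) (π : S → A → ℝ) (ρ : S → ℝ) (r : S → A → ℝ) (γ : ℝ) : ℝ :=
  ∑' t : ℕ, γ ^ t * ∑ s, ∑ a, stateDist P π ρ t s * π s a * r s a

/-- Value function `V^π(s)`. -/
noncomputable def Vval {S A : Type*} [Fintype S] [Fintype A] [DecidableEq S]
    (P : S → A → S → ℝ) (π : S → A → ℝ) (r : S → A → ℝ) (γ : ℝ) (s0 : S) : ℝ :=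
  Jret P π (fun s => if s = s0 then 1 else 0) r γ

/-- Q-function `Q^π(s,a)`. -/
noncomputable def Qval {S A : Type*} [Fintype S] [Fintype A] [DecidableEq S]
    (P : S → A → S → ℝ) (π : S → A → ℝ) (r : S → A → ℝ) (γ : ℝ) (s : S) (a : A) : ℝ :=
  r s a + γ * ∑ s', P s a s' * Vval P π r γ s'

/-- Normalized discounted state occupancy `d^π(s) = (1-γ) Σ_t γ^t P(s_t = s; π)`. -/
noncomputable def dOcc {S A : Type*} [Fintype S] [Fintype A]
    (P : S → A → S → ℝ) (π : S → A → ℝ) (ρ : S → ℝ) (γ : ℝ) (s : S) : ℝ :=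
  (1 - γ) * ∑' t : ℕ, γ ^ t * stateDist P π ρ t s

/-! ### Auxiliary lemmas -/

lemma exp_bound {S : Type*} [Fintype S] (d g : S → ℝ) (hd0 : ∀ s, 0 ≤ d s)
    (hd1 : ∑ s, d s = 1) (B : ℝ) (hg : ∀ s, |g s| ≤ B) : |∑ s, d s * g s| ≤ B := by
  calc |∑ s, d s * g s| ≤ ∑ s, |d s * g s| := Finset.abs_sum_le_sum_abs _ _
    _ ≤ ∑ s, d s * B := by
        refine Finset.sum_le_sum fun s _ => ?_
        rw [abs_mul, abs_of_nonneg (hd0 s)]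
        exact mul_le_mul_of_nonneg_left (hg s) (hd0 s)
    _ = B := by rw [← Finset.sum_mul, hd1, one_mul]

lemma key_summable (γ : ℝ) (hγ0 : 0 ≤ γ) (hγ1 : γ < 1) (c : ℕ → ℝ) (B : ℝ)
    (hc : ∀ t, |c t| ≤ B) : Summable (fun t => γ ^ t * c t) := by
  rw [← summable_abs_iff]
  refine Summable.of_nonneg_of_le (fun t => abs_nonneg _) (fun t => ?_)
    ((summable_geometric_of_lt_one hγ0 hγ1).mul_right B)
  rw [abs_mul, abs_pow, abs_of_nonneg hγ0]
  exact mul_le_mul_of_nonneg_left (hc t) (pow_nonneg hγ0 t)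

lemma exp_summable {S : Type*} [Fintype S] (γ : ℝ) (hγ0 : 0 ≤ γ) (hγ1 : γ < 1)
    (μ : ℕ → S → ℝ) (hμ0 : ∀ t s, 0 ≤ μ t s) (hμ1 : ∀ t, ∑ s, μ t s = 1) (g : S → ℝ) :
    Summable (fun t => γ ^ t * ∑ s, μ t s * g s) :=
  key_summable γ hγ0 hγ1 _ (∑ s, |g s|) fun t =>
    exp_bound (μ t) g (hμ0 t) (hμ1 t) _ fun s =>
      Finset.single_le_sum (f := fun s => |g s|) (fun _ _ => abs_nonneg _) (Finset.mem_univ s)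

section aux
variable {S A : Type*} [Fintype S] [Fintype A]
variable (P : S → A → S → ℝ) (π : S → A → ℝ) (ρ : S → ℝ)

lemma sd_nonneg (hP0 : ∀ s a s', 0 ≤ P s a s') (hπ0 : ∀ s a, 0 ≤ π s a)
    (hρ0 : ∀ s, 0 ≤ ρ s) : ∀ t s, 0 ≤ stateDist P π ρ t s := by
  intro t
  induction t with
  | zero => exact hρ0
  | succ t ih =>
    intro s'
    simp only [stateDist]
    exact Finset.sum_nonneg fun s _ => Finset.sum_nonneg fun a _ =>
      mul_nonneg (mul_nonneg (ih s) (hπ0 s a)) (hP0 s a s')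

lemma sd_sum (hP1 : ∀ s a, ∑ s', P s a s' = 1) (hπ1 : ∀ s, ∑ a, π s a = 1)
    (hρ1 : ∑ s, ρ s = 1) : ∀ t, ∑ s, stateDist P π ρ t s = 1 := by
  intro t
  induction t with
  | zero => exact hρ1
  | succ t ih =>
    simp only [stateDist]
    rw [Finset.sum_comm]
    calc ∑ s, ∑ s', ∑ a, stateDist P π ρ t s * π s a * P s a s'
        = ∑ s, stateDist P π ρ t s := by
          refine Finset.sum_congr rfl fun s _ => ?_
          rw [Finset.sum_comm]
          simp_rw [← Finset.mul_sum, hP1, mul_one, ← Finset.mul_sum, hπ1, mul_one]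
      _ = 1 := ih

lemma sd_shift : ∀ t s', stateDist P π ρ (t + 1) s' = stateDist P π (stateDist P π ρ 1) t s' := by
  intro t
  induction t with
  | zero => intro s'; simp only [stateDist]
  | succ t ih =>
    intro s'
    show (∑ s, ∑ a, stateDist P π ρ (t+1) s * π s a * P s a s') = _
    simp_rw [ih]
    rfl

/-- Generic linearity rearrangement. -/
lemma sum_lin {S0 : Type*} [Fintype S0] (w : S0 → ℝ) (D : S0 → S → ℝ) (h : S → A → ℝ) :
    ∑ s, ∑ a, (∑ s0, w s0 * D s0 s) * h s a
      = ∑ s0, w s0 * ∑ s, ∑ a, D s0 s * h s a := by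
  calc ∑ s, ∑ a, (∑ s0, w s0 * D s0 s) * h s a
      = ∑ s, ∑ a, ∑ s0, w s0 * (D s0 s * h s a) := by
        refine Finset.sum_congr rfl fun s _ => Finset.sum_congr rfl fun a _ => ?_
        rw [Finset.sum_mul]
        exact Finset.sum_congr rfl fun s0 _ => by ring
    _ = ∑ s, ∑ s0, ∑ a, w s0 * (D s0 s * h s a) :=
        Finset.sum_congr rfl fun s _ => Finset.sum_comm
    _ = ∑ s0, ∑ s, ∑ a, w s0 * (D s0 s * h s a) := Finset.sum_comm
    _ = ∑ s0, w s0 * ∑ s, ∑ a, D s0 s * h s a := by simp_rw [Finset.mul_sum]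

variable [DecidableEq S]

lemma sd_linear : ∀ t s, stateDist P π ρ t s =
    ∑ s0, ρ s0 * stateDist P π (fun x => if x = s0 then 1 else 0) t s := by
  intro t
  induction t with
  | zero =>
    intro s
    simp only [stateDist]
    simp [mul_ite]
  | succ t ih =>
    intro s'
    simp only [stateDist]
    calc ∑ s, ∑ a, stateDist P π ρ t s * π s a * P s a s'
        = ∑ s, ∑ a, (∑ s0, ρ s0 * stateDist P π (fun x => if x = s0 then 1 else 0) t s)
            * (π s a * P s a s') := by
          refine Finset.sum_congr rfl fun s _ => Finset.sum_congr rfl fun a _ => ?_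
          rw [ih s, mul_assoc]
      _ = ∑ s0, ρ s0 * ∑ s, ∑ a, stateDist P π (fun x => if x = s0 then 1 else 0) t s
            * (π s a * P s a s') := sum_lin _ _ _
      _ = ∑ s0, ρ s0 * ∑ s, ∑ a, stateDist P π (fun x => if x = s0 then 1 else 0) t s
            * π s a * P s a s' := by simp_rw [mul_assoc]

/-- Linearity of expectations under `stateDist` in the initial distribution. -/
lemma exp_linear (t : ℕ) (g : S → ℝ) :
    ∑ s, stateDist P π ρ t s * g s
      = ∑ s0, ρ s0 * ∑ s, stateDist P π (fun x => if x = s0 then 1 else 0) t s * g s := by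
  calc ∑ s, stateDist P π ρ t s * g s
      = ∑ s, ∑ s0, ρ s0 * (stateDist P π (fun x => if x = s0 then 1 else 0) t s * g s) := by
        refine Finset.sum_congr rfl fun s _ => ?_
        rw [sd_linear P π ρ t, Finset.sum_mul]
        exact Finset.sum_congr rfl fun s0 _ => mul_assoc _ _ _
    _ = ∑ s0, ∑ s, ρ s0 * (stateDist P π (fun x => if x = s0 then 1 else 0) t s * g s) :=
        Finset.sum_comm
    _ = ∑ s0, ρ s0 * ∑ s, stateDist P π (fun x => if x = s0 then 1 else 0) t s * g s := by
        simp_rw [Finset.mul_sum]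

/-- Rewrite `Jret` with the inner action-sum collected. -/
lemma Jret_eq (r : S → A → ℝ) (γ : ℝ) :
    Jret P π ρ r γ = ∑' t : ℕ, γ ^ t * ∑ s, stateDist P π ρ t s * ∑ a, π s a * r s a := by
  unfold Jret
  refine tsum_congr fun t => ?_
  congr 1
  refine Finset.sum_congr rfl fun s _ => ?_
  rw [Finset.mul_sum]
  exact Finset.sum_congr rfl fun a _ => by ring

lemma delta_nonneg (s0 s : S) : (0:ℝ) ≤ if s = s0 then 1 else 0 := by split <;> norm_num

lemma delta_sum (s0 : S) : ∑ s, (if s = s0 then (1:ℝ) else 0) = 1 := by simp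

/-- `Jret` is linear in the initial distribution. -/
lemma Jret_linear (r : S → A → ℝ) (γ : ℝ) (hγ0 : 0 ≤ γ) (hγ1 : γ < 1)
    (hP0 : ∀ s a s', 0 ≤ P s a s') (hP1 : ∀ s a, ∑ s', P s a s' = 1)
    (hπ0 : ∀ s a, 0 ≤ π s a) (hπ1 : ∀ s, ∑ a, π s a = 1) :
    Jret P π ρ r γ = ∑ s0, ρ s0 * Vval P π r γ s0 := by
  have hsum : ∀ s0 : S, Summable (fun t => ρ s0 * (γ ^ t *
      ∑ s, stateDist P π (fun x => if x = s0 then 1 else 0) t s * ∑ a, π s a * r s a)) := by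
    intro s0
    exact (exp_summable γ hγ0 hγ1 _
      (fun t s => sd_nonneg P π _ hP0 hπ0 (delta_nonneg s0) t s)
      (fun t => sd_sum P π _ hP1 hπ1 (delta_sum s0) t) _).mul_left _
  rw [Jret_eq]
  calc ∑' t : ℕ, γ ^ t * ∑ s, stateDist P π ρ t s * ∑ a, π s a * r s a
      = ∑' t : ℕ, ∑ s0, ρ s0 * (γ ^ t *
          ∑ s, stateDist P π (fun x => if x = s0 then 1 else 0) t s * ∑ a, π s a * r s a) := by
        refine tsum_congr fun t => ?_
        rw [exp_linear P π ρ t, Finset.mul_sum]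
        exact Finset.sum_congr rfl fun s0 _ => by ring
    _ = ∑ s0, ∑' t : ℕ, ρ s0 * (γ ^ t *
          ∑ s, stateDist P π (fun x => if x = s0 then 1 else 0) t s * ∑ a, π s a * r s a) :=
        Summable.tsum_finsetSum fun s0 _ => hsum s0
    _ = ∑ s0, ρ s0 * Vval P π r γ s0 := by
        refine Finset.sum_congr rfl fun s0 _ => ?_
        rw [tsum_mul_left, Vval, Jret_eq]

/-- Expand `∑ a π(a|s) Q^{πv}(s,a)`. -/
lemma piQ (πv : S → A → ℝ) (r : S → A → ℝ) (γ : ℝ) (s : S) :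
    ∑ a, π s a * Qval P πv r γ s a
      = (∑ a, π s a * r s a) + γ * ∑ s', (∑ a, π s a * P s a s') * Vval P πv r γ s' := by
  simp only [Qval, mul_add, Finset.sum_add_distrib]
  congr 1
  calc ∑ a, π s a * (γ * ∑ s', P s a s' * Vval P πv r γ s')
      = ∑ a, ∑ s', γ * (π s a * (P s a s' * Vval P πv r γ s')) := by
        refine Finset.sum_congr rfl fun a _ => ?_
        rw [Finset.mul_sum, Finset.mul_sum]
        exact Finset.sum_congr rfl fun s' _ => by ring
    _ = ∑ s', ∑ a, γ * (π s a * (P s a s' * Vval P πv r γ s')) := Finset.sum_comm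
    _ = γ * ∑ s', (∑ a, π s a * P s a s') * Vval P πv r γ s' := by
        rw [Finset.mul_sum]
        refine Finset.sum_congr rfl fun s' _ => ?_
        rw [Finset.sum_mul, Finset.mul_sum]
        exact Finset.sum_congr rfl fun a _ => by ring

end aux

/-- Performance difference lemma: for any two policies `π`, `π'` in a finite discounted MDP,
`J(π) - J(π') = H · E_{s ~ d^π} [Σ_a π(a|s) A^{π'}(s,a)]`, where `H = 1/(1-γ)` and
`A^{π'} = Q^{π'} - V^{π'}`. -/
theorem stmt_9 {S A : Type*} [Fintype S] [Fintype A] [DecidableEq S]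
    (γ : ℝ) (hγ0 : 0 ≤ γ) (hγ1 : γ < 1)
    (P : S → A → S → ℝ) (hP0 : ∀ s a s', 0 ≤ P s a s') (hP1 : ∀ s a, ∑ s', P s a s' = 1)
    (r : S → A → ℝ) (hr : ∀ s a, |r s a| ≤ 1)
    (ρ : S → ℝ) (hρ0 : ∀ s, 0 ≤ ρ s) (hρ1 : ∑ s, ρ s = 1)
    (π π' : S → A → ℝ)
    (hπ0 : ∀ s a, 0 ≤ π s a) (hπ1 : ∀ s, ∑ a, π s a = 1)
    (hπ'0 : ∀ s a, 0 ≤ π' s a) (hπ'1 : ∀ s, ∑ a, π' s a = 1) :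
    Jret P π ρ r γ - Jret P π' ρ r γ =
      (1 / (1 - γ)) * ∑ s, dOcc P π ρ γ s *
        ∑ a, π s a * (Qval P π' r γ s a - Vval P π' r γ s) := by
  set V : S → ℝ := Vval P π' r γ with hV
  set g : S → ℝ := fun s => ∑ a, π s a * (Qval P π' r γ s a - V s) with hg
  have hd0 := sd_nonneg P π ρ hP0 hπ0 hρ0
  have hd1 := sd_sum P π ρ hP1 hπ1 hρ1
  have hγne : (1:ℝ) - γ ≠ 0 := by linarith
  -- Step A: RHS equals a series
  have hs : ∀ s : S, Summable (fun t => γ ^ t * (stateDist P π ρ t s * g s)) := by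
    intro s
    refine key_summable γ hγ0 hγ1 _ |g s| fun t => ?_
    rw [abs_mul, abs_of_nonneg (hd0 t s)]
    have hle : stateDist P π ρ t s ≤ 1 :=
      (Finset.single_le_sum (fun s' _ => hd0 t s') (Finset.mem_univ s)).trans_eq (hd1 t)
    exact mul_le_of_le_one_left (abs_nonneg _) hle
  have hA : (1 / (1 - γ)) * ∑ s, dOcc P π ρ γ s * g s
      = ∑' t : ℕ, γ ^ t * ∑ s, stateDist P π ρ t s * g s := by
    calc (1 / (1 - γ)) * ∑ s, dOcc P π ρ γ s * g s
        = (1 / (1 - γ)) * ((1 - γ) * ∑ s, (∑' t : ℕ, γ ^ t * stateDist P π ρ t s) * g s) := by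
          congr 1
          rw [Finset.mul_sum]
          exact Finset.sum_congr rfl fun s _ => by simp only [dOcc]; ring
      _ = ∑ s, (∑' t : ℕ, γ ^ t * stateDist P π ρ t s) * g s := by
          rw [← mul_assoc, one_div, inv_mul_cancel₀ hγne, one_mul]
      _ = ∑ s, ∑' t : ℕ, γ ^ t * (stateDist P π ρ t s * g s) := by
          refine Finset.sum_congr rfl fun s _ => ?_
          rw [← tsum_mul_right]
          exact tsum_congr fun t => by ring
      _ = ∑' t : ℕ, ∑ s, γ ^ t * (stateDist P π ρ t s * g s) := (Summable.tsum_finsetSum fun s _ => hs s).symm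
      _ = ∑' t : ℕ, γ ^ t * ∑ s, stateDist P π ρ t s * g s :=
          tsum_congr fun t => by rw [Finset.mul_sum]
  -- per-state expansion of g
  have hgs : ∀ s, g s = (∑ a, π s a * r s a)
      + γ * (∑ s', (∑ a, π s a * P s a s') * V s') - V s := by
    intro s
    calc g s = (∑ a, π s a * Qval P π' r γ s a) - V s := by
          simp only [hg, mul_sub, Finset.sum_sub_distrib, ← Finset.sum_mul, hπ1 s, one_mul]
      _ = _ := by rw [piQ P π π' r γ s]
  -- per-time-step identity
  have hkey : ∀ t : ℕ, γ ^ t * ∑ s, stateDist P π ρ t s * g s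
      = (γ ^ t * ∑ s, stateDist P π ρ t s * ∑ a, π s a * r s a)
        + (γ ^ (t+1) * ∑ s, stateDist P π ρ (t+1) s * V s)
        - (γ ^ t * ∑ s, stateDist P π ρ t s * V s) := by
    intro t
    have hmid : ∑ s, stateDist P π ρ t s * ∑ s', (∑ a, π s a * P s a s') * V s'
        = ∑ s', stateDist P π ρ (t+1) s' * V s' := by
      calc ∑ s, stateDist P π ρ t s * ∑ s', (∑ a, π s a * P s a s') * V s'
          = ∑ s, ∑ s', ∑ a, stateDist P π ρ t s * π s a * P s a s' * V s' := by
            refine Finset.sum_congr rfl fun s _ => ?_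
            rw [Finset.mul_sum]
            refine Finset.sum_congr rfl fun s' _ => ?_
            rw [Finset.sum_mul, Finset.mul_sum]
            exact Finset.sum_congr rfl fun a _ => by ring
        _ = ∑ s', ∑ s, ∑ a, stateDist P π ρ t s * π s a * P s a s' * V s' := Finset.sum_comm
        _ = ∑ s', (∑ s, ∑ a, stateDist P π ρ t s * π s a * P s a s') * V s' := by
            refine Finset.sum_congr rfl fun s' _ => ?_
            rw [Finset.sum_mul]
            exact Finset.sum_congr rfl fun s _ => by rw [Finset.sum_mul]
        _ = ∑ s', stateDist P π ρ (t+1) s' * V s' :=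
            Finset.sum_congr rfl fun s' _ => by simp only [stateDist]
    calc γ ^ t * ∑ s, stateDist P π ρ t s * g s
        = γ ^ t * ((∑ s, stateDist P π ρ t s * ∑ a, π s a * r s a)
            + γ * (∑ s, stateDist P π ρ t s * ∑ s', (∑ a, π s a * P s a s') * V s')
            - ∑ s, stateDist P π ρ t s * V s) := by
          congr 1
          calc ∑ s, stateDist P π ρ t s * g s
              = ∑ s, (stateDist P π ρ t s * ∑ a, π s a * r s a
                  + γ * (stateDist P π ρ t s * ∑ s', (∑ a, π s a * P s a s') * V s')
                  - stateDist P π ρ t s * V s) := by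
                refine Finset.sum_congr rfl fun s _ => ?_
                rw [hgs s]; ring
            _ = _ := by
                rw [Finset.sum_sub_distrib, Finset.sum_add_distrib, Finset.mul_sum]
      _ = _ := by rw [hmid, pow_succ]; ring
  -- summabilities
  have hsum1 : Summable (fun t => γ ^ t * ∑ s, stateDist P π ρ t s * ∑ a, π s a * r s a) :=
    exp_summable γ hγ0 hγ1 (stateDist P π ρ) hd0 hd1 (fun s => ∑ a, π s a * r s a)
  have hsumU : Summable (fun t => γ ^ t * ∑ s, stateDist P π ρ t s * V s) :=
    exp_summable γ hγ0 hγ1 (stateDist P π ρ) hd0 hd1 V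
  have hsumU' : Summable (fun t => γ ^ (t+1) * ∑ s, stateDist P π ρ (t+1) s * V s) :=
    (summable_nat_add_iff (f := fun t => γ ^ t * ∑ s, stateDist P π ρ t s * V s) 1).mpr hsumU
  have hshift : ∑' t : ℕ, γ ^ (t+1) * ∑ s, stateDist P π ρ (t+1) s * V s
      = (∑' t : ℕ, γ ^ t * ∑ s, stateDist P π ρ t s * V s)
        - γ ^ 0 * ∑ s, stateDist P π ρ 0 s * V s := by
    have := Summable.tsum_eq_zero_add hsumU
    linarith [this]
  rw [hA]
  calc Jret P π ρ r γ - Jret P π' ρ r γ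
      = (∑' t : ℕ, γ ^ t * ∑ s, stateDist P π ρ t s * ∑ a, π s a * r s a)
        - ∑ s, ρ s * V s := by
        rw [Jret_eq P π ρ r γ, Jret_linear P π' ρ r γ hγ0 hγ1 hP0 hP1 hπ'0 hπ'1]
    _ = (∑' t : ℕ, γ ^ t * ∑ s, stateDist P π ρ t s * ∑ a, π s a * r s a)
        + ((∑' t : ℕ, γ ^ t * ∑ s, stateDist P π ρ t s * V s)
          - γ ^ 0 * ∑ s, stateDist P π ρ 0 s * V s)
        - ∑' t : ℕ, γ ^ t * ∑ s, stateDist P π ρ t s * V s := by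
        have h0 : γ ^ 0 * ∑ s, stateDist P π ρ 0 s * V s = ∑ s, ρ s * V s := by
          simp only [stateDist, pow_zero, one_mul]
        rw [h0]; ring
    _ = ∑' t : ℕ, γ ^ t * ∑ s, stateDist P π ρ t s * g s := by
        rw [← hshift, ← Summable.tsum_add hsum1 hsumU', ← Summable.tsum_sub (hsum1.add hsumU') hsumU]
        exact tsum_congr fun t => (hkey t).symm
end

section
/- In the conservative value iteration algorithm, on the good event E, the estimation error propagates as Q*(s,a) - Q̂_i(s,a) ≤ γ · P(s,a)·(Q*(·;π*) - Q̂_{i-1}(·;π*)) + 2·b_i(s,a) for every (s,a), where f(s;π) := Σ_a π(a|s)f(s,a). -/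
open Finset

/-- Error propagation in conservative value iteration: on the good event (where
`(r - r̂) + γ (P - P̂)·V̂_{i-1} ≤ b_i`), with `Q̂_i = r̂ - b_i + γ P̂·V̂_{i-1}`,
`V̂_{i-1} ≥ Q̂_{i-1}(·; π*)`, and `Q*` satisfying the Bellman equation with `V* = Q*(·; π*)`
for a deterministic optimal policy `π*`, we have
`Q*(s,a) - Q̂_i(s,a) ≤ γ P(s,a)·(Q*(·;π*) - Q̂_{i-1}(·;π*)) + 2 b_i(s,a)` for all `(s,a)`. -/
theorem stmt_13 {S A : Type*} [Fintype S] [Fintype A]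
    (γ : ℝ) (hγ : 0 ≤ γ)
    (P Phat : S → A → S → ℝ) (hP0 : ∀ s a s', 0 ≤ P s a s')
    (r rhat b : S → A → ℝ)
    (πstar : S → A)
    (Qstar : S → A → ℝ) (Vstar : S → ℝ)
    (hVstar : ∀ s, Vstar s = Qstar s (πstar s))
    (hBellman : ∀ s a, Qstar s a = r s a + γ * ∑ s', P s a s' * Vstar s')
    (Qprev : S → A → ℝ) (Vprev : S → ℝ)
    (hVprev : ∀ s, Qprev s (πstar s) ≤ Vprev s)
    -- good event: the penalty dominates the empirical estimation errors
    (hE : ∀ s a, (r s a - rhat s a) +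
      γ * ∑ s', (P s a s' - Phat s a s') * Vprev s' ≤ b s a)
    (Qcur : S → A → ℝ)
    (hQcur : ∀ s a, Qcur s a = rhat s a - b s a + γ * ∑ s', Phat s a s' * Vprev s') :
    ∀ s a, Qstar s a - Qcur s a ≤
      γ * (∑ s', P s a s' * (Qstar s' (πstar s') - Qprev s' (πstar s'))) + 2 * b s a := by
  intro s a
  have h1 : Qstar s a - Qcur s a =
      (r s a - rhat s a) + γ * ∑ s', (P s a s' - Phat s a s') * Vprev s'
      + b s a + γ * ∑ s', P s a s' * (Vstar s' - Vprev s') := by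
    rw [hBellman s a, hQcur s a]
    simp only [sub_mul, mul_sub]
    rw [Finset.sum_sub_distrib, Finset.sum_sub_distrib]
    ring
  have h2 : γ * ∑ s', P s a s' * (Vstar s' - Vprev s')
      ≤ γ * ∑ s', P s a s' * (Qstar s' (πstar s') - Qprev s' (πstar s')) := by
    apply mul_le_mul_of_nonneg_left _ hγ
    apply Finset.sum_le_sum
    intro i _
    apply mul_le_mul_of_nonneg_left _ (hP0 s a i)
    rw [hVstar]
    exact sub_le_sub_left (hVprev i) _
  have h3 := hE s a
  linarith
end

section
/- Missing-mass bound: Let a dataset of N i.i.d. samples from μ over S×A be given, with counts n(s,a). For a deterministic policy π* with normalized occupancy d* satisfying d*(s,a) ≤ C*·μ(s,a) for all (s,a), and H = 1/(1-γ): Σ_s ρ(s)·P(n(s,π*(s)) = 0) ≤ 4·C*·|S|·H/(9N). -/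
open Finset

lemma key_missing_mass (N : ℕ) (hN : 0 < N) (p : ℝ) (hp0 : 0 ≤ p) (hp1 : p ≤ 1) :
    p * (1 - p) ^ N ≤ 4 / (9 * N) := by
  have hNpos : (0:ℝ) < N := by exact_mod_cast hN
  have h1 : (1 - p) ^ N ≤ Real.exp (-(N * p)) := by
    calc (1 - p) ^ N ≤ (Real.exp (-p)) ^ N := by
          apply pow_le_pow_left₀ (by linarith)
          have := Real.add_one_le_exp (-p); linarith
      _ = Real.exp (-(N * p)) := by
          rw [← Real.exp_nat_mul]; ring_nf
  set x : ℝ := N * p with hx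
  have hx0 : 0 ≤ x := by positivity
  have h2 : x * Real.exp (-x) ≤ 1 / Real.exp 1 := by
    have h := Real.add_one_le_exp (x - 1)
    have hxle : x ≤ Real.exp x / Real.exp 1 := by
      rw [← Real.exp_sub]; linarith
    have hepos : 0 < Real.exp x := Real.exp_pos x
    rw [Real.exp_neg]
    calc x * (Real.exp x)⁻¹ ≤ (Real.exp x / Real.exp 1) * (Real.exp x)⁻¹ := by
          apply mul_le_mul_of_nonneg_right hxle (by positivity)
      _ = 1 / Real.exp 1 := by field_simp
  have h3 : (1:ℝ) / Real.exp 1 ≤ 4 / 9 := by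
    have := Real.exp_one_gt_d9
    rw [div_le_div_iff₀ (Real.exp_pos 1) (by norm_num)]
    nlinarith
  have h4 : x * (1 - p) ^ N ≤ 4 / 9 := by
    have hpow0 : 0 ≤ (1 - p) ^ N := pow_nonneg (by linarith) N
    calc x * (1 - p) ^ N ≤ x * Real.exp (-x) := by
          apply mul_le_mul_of_nonneg_left h1 hx0
      _ ≤ 1 / Real.exp 1 := h2
      _ ≤ 4 / 9 := h3
  rw [le_div_iff₀ (by positivity : (0:ℝ) < 9 * N)]
  calc p * (1 - p) ^ N * (9 * (N:ℝ)) = 9 * (x * (1 - p) ^ N) := by rw [hx]; ring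
    _ ≤ 9 * (4 / 9) := by linarith
    _ = 4 := by norm_num

/-- Missing-mass bound: for a dataset of `N` i.i.d. samples from `μ` over `S × A` (so that the
probability that `(s,a)` is never sampled is `(1 - μ(s,a))^N`), a deterministic policy `π*`
with normalized occupancy `d*` satisfying `d*(s,a) ≤ C* μ(s,a)` and initial distribution `ρ`
satisfying `ρ s ≤ H d*(s, π* s)` with `H = 1/(1-γ)`,
`Σ_s ρ(s) P(n(s, π* s) = 0) ≤ 4 C* |S| H / (9 N)`. -/
theorem stmt_16 {S A : Type*} [Fintype S] [Fintype A]
    (γ Cstar : ℝ) (N : ℕ) (hN : 0 < N) (hγ0 : 0 ≤ γ) (hγ1 : γ < 1) (hC0 : 0 ≤ Cstar)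
    (H : ℝ) (hH : H = 1 / (1 - γ))
    (μ : S → A → ℝ) (hμ0 : ∀ s a, 0 ≤ μ s a) (hμ1 : ∀ s a, μ s a ≤ 1)
    (d : S → A → ℝ) (hd0 : ∀ s a, 0 ≤ d s a)
    (hC : ∀ s a, d s a ≤ Cstar * μ s a)
    (π : S → A)
    (ρ : S → ℝ) (hρ0 : ∀ s, 0 ≤ ρ s) (hρ : ∀ s, ρ s ≤ H * d s (π s))
    (Pzero : S → ℝ) (hPzero : ∀ s, Pzero s = (1 - μ s (π s)) ^ N) :
    ∑ s, ρ s * Pzero s ≤ 4 * Cstar * (Fintype.card S) * H / (9 * N) := by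
  have hNpos : (0:ℝ) < N := by exact_mod_cast hN
  have hγ : (0:ℝ) < 1 - γ := by linarith
  have hH0 : 0 ≤ H := by rw [hH]; positivity
  have hterm : ∀ s : S, ρ s * Pzero s ≤ H * Cstar * (4 / (9 * N)) := by
    intro s
    have hpow0 : 0 ≤ (1 - μ s (π s)) ^ N := pow_nonneg (by linarith [hμ1 s (π s)]) N
    have hkey := key_missing_mass N hN (μ s (π s)) (hμ0 s (π s)) (hμ1 s (π s))
    calc ρ s * Pzero s ≤ (H * d s (π s)) * Pzero s := by
          apply mul_le_mul_of_nonneg_right (hρ s)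
          rw [hPzero s]; exact hpow0
      _ ≤ (H * (Cstar * μ s (π s))) * Pzero s := by
          apply mul_le_mul_of_nonneg_right _ (by rw [hPzero s]; exact hpow0)
          exact mul_le_mul_of_nonneg_left (hC s (π s)) hH0
      _ = H * Cstar * (μ s (π s) * (1 - μ s (π s)) ^ N) := by rw [hPzero s]; ring
      _ ≤ H * Cstar * (4 / (9 * N)) := by
          apply mul_le_mul_of_nonneg_left hkey (by positivity)
  calc ∑ s, ρ s * Pzero s ≤ ∑ _s : S, H * Cstar * (4 / (9 * N)) :=
        Finset.sum_le_sum (fun s _ => hterm s)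
    _ = (Fintype.card S) * (H * Cstar * (4 / (9 * N))) := by
        rw [Finset.sum_const]; simp [Finset.card_univ, nsmul_eq_mul]
    _ = 4 * Cstar * (Fintype.card S) * H / (9 * N) := by ring
end
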